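/- (Theorem 4.2, counting form via condition (4.4)) Let M be a 0–1 matrix whose rows are split into a top group of m₁ rows and a bottom group of m₂ rows, and whose columns are split into a left group of n₁ columns and a right group of n₂ columns (m₁, m₂, n₁, n₂ ≥ 1). Suppose δ₁, δ₂, δ₃, δ₄ ∈ [0, 1) are such that every top row has density at least δ₁ in the left columns and at least δ₂ in the right columns, and every bottom row has density at least δ₃ in the left columns and at least δ₄ in the right columns. If k₁ ≤ n₁ and k₂ ≤ n₂ are natural numbers with m₁·(1−δ₁)^{k₁}·(1−δ₂)^{k₂} + m₂·(1−δ₃)^{k₁}·(1−δ₄)^{k₂} < 1, then there exist a set J₁ of left columns with |J₁| = k₁ and a set J₂ of right columns with |J₂| = k₂ such that J₁ ∪ J₂ covers every row of M. -/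

import Mathlib

open Finset

lemma chooseMulPowLe {a n : ℕ} (h : a ≤ n) : ∀ k, a.choose k * n ^ k ≤ n.choose k * a ^ k := by
  intro k
  induction k with
  | zero => simp
  | succ k ih =>
    have hpos : 0 < k + 1 := Nat.succ_pos k
    apply Nat.le_of_mul_le_mul_right _ hpos
    have e1 : a.choose (k+1) * n ^ (k+1) * (k+1) = (a.choose k * n ^ k) * ((a - k) * n) := by
      rw [show a.choose (k+1) * n ^ (k+1) * (k+1) = a.choose (k+1) * (k+1) * (n ^ k * n) by ring,
        Nat.choose_succ_right_eq]
      ring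
    have e2 : n.choose (k+1) * a ^ (k+1) * (k+1) = (n.choose k * a ^ k) * ((n - k) * a) := by
      rw [show n.choose (k+1) * a ^ (k+1) * (k+1) = n.choose (k+1) * (k+1) * (a ^ k * a) by ring,
        Nat.choose_succ_right_eq]
      ring
    rw [e1, e2]
    apply Nat.mul_le_mul ih
    rcases Nat.le_total a k with hak | hak
    · simp [Nat.sub_eq_zero_of_le hak]
    · calc (a - k) * n = a * n - k * n := Nat.sub_mul a k n
        _ ≤ n * a - k * a := by
            rw [mul_comm a n]
            exact Nat.sub_le_sub_left (Nat.mul_le_mul_left k h) _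
        _ = (n - k) * a := (Nat.sub_mul n k a).symm

lemma chooseRealBound {n k z : ℕ} (δ : ℝ) (hn : 0 < n) (hz : z ≤ n) (hδ : 0 ≤ 1 - δ)
    (hzr : (z : ℝ) ≤ n * (1 - δ)) :
    (z.choose k : ℝ) ≤ (n.choose k : ℝ) * (1 - δ) ^ k := by
  have hnpos : (0 : ℝ) < (n : ℝ) ^ k := by positivity
  rw [← mul_le_mul_iff_of_pos_right hnpos]
  have h1 : (z.choose k : ℝ) * n ^ k ≤ (n.choose k : ℝ) * z ^ k := by
    exact_mod_cast chooseMulPowLe hz k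
  calc (z.choose k : ℝ) * n ^ k ≤ (n.choose k : ℝ) * z ^ k := h1
    _ ≤ (n.choose k : ℝ) * ((n : ℝ) * (1 - δ)) ^ k := by
        apply mul_le_mul_of_nonneg_left _ (by positivity)
        exact pow_le_pow_left₀ (by positivity) hzr k
    _ = (n.choose k : ℝ) * (1 - δ) ^ k * (n : ℝ) ^ k := by rw [mul_pow]; ring


set_option maxHeartbeats 1000000 in
/-- **Theorem 4.2 (counting form, condition (4.4)).** Let `M` be a 0–1 matrix with rows
split into a top group of `m₁` rows and a bottom group of `m₂` rows, and columns split
into a left group of `n₁` columns and a right group of `n₂` columns. If every top row has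
density at least `δ₁` in the left columns and at least `δ₂` in the right columns, every
bottom row has density at least `δ₃` in the left columns and at least `δ₄` in the right
columns, and `k₁ ≤ n₁`, `k₂ ≤ n₂` satisfy
`m₁ (1-δ₁)^{k₁} (1-δ₂)^{k₂} + m₂ (1-δ₃)^{k₁} (1-δ₄)^{k₂} < 1`, then there are `J₁`, `J₂`
of left resp. right columns with `|J₁| = k₁`, `|J₂| = k₂` covering every row of `M`. -/
theorem stmt_5 {m₁ m₂ n₁ n₂ : ℕ}
    (hm₁ : 1 ≤ m₁) (hm₂ : 1 ≤ m₂) (hn₁ : 1 ≤ n₁) (hn₂ : 1 ≤ n₂)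
    (M : Fin m₁ ⊕ Fin m₂ → Fin n₁ ⊕ Fin n₂ → Bool)
    (δ₁ δ₂ δ₃ δ₄ : ℝ)
    (hδ₁ : 0 ≤ δ₁ ∧ δ₁ < 1) (hδ₂ : 0 ≤ δ₂ ∧ δ₂ < 1)
    (hδ₃ : 0 ≤ δ₃ ∧ δ₃ < 1) (hδ₄ : 0 ≤ δ₄ ∧ δ₄ < 1)
    (htop₁ : ∀ i : Fin m₁,
      δ₁ ≤ ((univ.filter (fun j : Fin n₁ => M (Sum.inl i) (Sum.inl j) = true)).card : ℝ) / (n₁ : ℝ))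
    (htop₂ : ∀ i : Fin m₁,
      δ₂ ≤ ((univ.filter (fun j : Fin n₂ => M (Sum.inl i) (Sum.inr j) = true)).card : ℝ) / (n₂ : ℝ))
    (hbot₁ : ∀ i : Fin m₂,
      δ₃ ≤ ((univ.filter (fun j : Fin n₁ => M (Sum.inr i) (Sum.inl j) = true)).card : ℝ) / (n₁ : ℝ))
    (hbot₂ : ∀ i : Fin m₂,
      δ₄ ≤ ((univ.filter (fun j : Fin n₂ => M (Sum.inr i) (Sum.inr j) = true)).card : ℝ) / (n₂ : ℝ))
    (k₁ k₂ : ℕ) (hk₁ : k₁ ≤ n₁) (hk₂ : k₂ ≤ n₂)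
    (hcond : (m₁ : ℝ) * (1 - δ₁) ^ k₁ * (1 - δ₂) ^ k₂
        + (m₂ : ℝ) * (1 - δ₃) ^ k₁ * (1 - δ₄) ^ k₂ < 1) :
    ∃ J₁ : Finset (Fin n₁), ∃ J₂ : Finset (Fin n₂),
      J₁.card = k₁ ∧ J₂.card = k₂ ∧
      ∀ i : Fin m₁ ⊕ Fin m₂,
        (∃ j ∈ J₁, M i (Sum.inl j) = true) ∨ (∃ j ∈ J₂, M i (Sum.inr j) = true) := by
  classical
  by_contra hcon
  push_neg at hcon
  have hn₁' : 0 < n₁ := hn₁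
  have hn₂' : 0 < n₂ := hn₂
  set Z₁ : Fin m₁ ⊕ Fin m₂ → Finset (Fin n₁) :=
    fun i => univ.filter (fun j => M i (Sum.inl j) = false) with hZ₁
  set Z₂ : Fin m₁ ⊕ Fin m₂ → Finset (Fin n₂) :=
    fun i => univ.filter (fun j => M i (Sum.inr j) = false) with hZ₂
  set P : Finset (Finset (Fin n₁) × Finset (Fin n₂)) :=
    (univ : Finset (Fin n₁)).powersetCard k₁ ×ˢ (univ : Finset (Fin n₂)).powersetCard k₂ with hP
  -- every pair is bad for some row
  have stepA : ∀ p ∈ P, 1 ≤ (univ.filter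
      (fun i : Fin m₁ ⊕ Fin m₂ => p.1 ⊆ Z₁ i ∧ p.2 ⊆ Z₂ i)).card := by
    intro p hp
    rw [hP, Finset.mem_product, Finset.mem_powersetCard_univ, Finset.mem_powersetCard_univ] at hp
    obtain ⟨i, hi⟩ := hcon p.1 p.2 hp.1 hp.2
    apply Finset.card_pos.2
    refine ⟨i, Finset.mem_filter.2 ⟨Finset.mem_univ i, ?_, ?_⟩⟩
    · intro j hj
      simp only [hZ₁, Finset.mem_filter, Finset.mem_univ, true_and]
      have := hi.1 j hj
      simpa using this
    · intro j hj
      simp only [hZ₂, Finset.mem_filter, Finset.mem_univ, true_and]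
      have := hi.2 j hj
      simpa using this
  have stepB : P.card ≤ ∑ p ∈ P, (univ.filter
      (fun i : Fin m₁ ⊕ Fin m₂ => p.1 ⊆ Z₁ i ∧ p.2 ⊆ Z₂ i)).card := by
    calc P.card = ∑ p ∈ P, 1 := by simp
      _ ≤ _ := Finset.sum_le_sum stepA
  have stepC : ∑ p ∈ P, (univ.filter
      (fun i : Fin m₁ ⊕ Fin m₂ => p.1 ⊆ Z₁ i ∧ p.2 ⊆ Z₂ i)).card
      = ∑ i : Fin m₁ ⊕ Fin m₂, (P.filter (fun p => p.1 ⊆ Z₁ i ∧ p.2 ⊆ Z₂ i)).card := by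
    simp only [Finset.card_filter]
    exact Finset.sum_comm
  have stepD : ∀ i : Fin m₁ ⊕ Fin m₂,
      (P.filter (fun p => p.1 ⊆ Z₁ i ∧ p.2 ⊆ Z₂ i)).card
      = (Z₁ i).card.choose k₁ * (Z₂ i).card.choose k₂ := by
    intro i
    have h1 : P.filter (fun p => p.1 ⊆ Z₁ i ∧ p.2 ⊆ Z₂ i)
        = (Z₁ i).powersetCard k₁ ×ˢ (Z₂ i).powersetCard k₂ := by
      ext p
      simp only [hP, Finset.mem_filter, Finset.mem_product, Finset.mem_powersetCard,
        Finset.mem_powersetCard_univ]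
      aesop
    rw [h1, Finset.card_product, Finset.card_powersetCard, Finset.card_powersetCard]
  -- cardinalities of zero sets
  have zle₁ : ∀ i, (Z₁ i).card ≤ n₁ := fun i => by
    simpa using Finset.card_filter_le (univ : Finset (Fin n₁)) _
  have zle₂ : ∀ i, (Z₂ i).card ≤ n₂ := fun i => by
    simpa using Finset.card_filter_le (univ : Finset (Fin n₂)) _
  have zsum₁ : ∀ i, (univ.filter (fun j : Fin n₁ => M i (Sum.inl j) = true)).card
      + (Z₁ i).card = n₁ := by
    intro i
    have : (Z₁ i) = univ.filter (fun j : Fin n₁ => ¬ (M i (Sum.inl j) = true)) := by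
      simp [hZ₁]
    rw [this]
    simpa using Finset.card_filter_add_card_filter_not
      (s := (univ : Finset (Fin n₁))) (p := fun j => M i (Sum.inl j) = true)
  have zsum₂ : ∀ i, (univ.filter (fun j : Fin n₂ => M i (Sum.inr j) = true)).card
      + (Z₂ i).card = n₂ := by
    intro i
    have : (Z₂ i) = univ.filter (fun j : Fin n₂ => ¬ (M i (Sum.inr j) = true)) := by
      simp [hZ₂]
    rw [this]
    simpa using Finset.card_filter_add_card_filter_not
      (s := (univ : Finset (Fin n₂))) (p := fun j => M i (Sum.inr j) = true)
  -- real density bounds on zero sets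
  have zr₁top : ∀ t : Fin m₁, ((Z₁ (Sum.inl t)).card : ℝ) ≤ n₁ * (1 - δ₁) := by
    intro t
    have hd := htop₁ t
    rw [le_div_iff₀ (by exact_mod_cast hn₁')] at hd
    have hz := zsum₁ (Sum.inl t)
    have : ((univ.filter (fun j : Fin n₁ => M (Sum.inl t) (Sum.inl j) = true)).card : ℝ)
        + ((Z₁ (Sum.inl t)).card : ℝ) = n₁ := by exact_mod_cast hz
    linarith
  have zr₂top : ∀ t : Fin m₁, ((Z₂ (Sum.inl t)).card : ℝ) ≤ n₂ * (1 - δ₂) := by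
    intro t
    have hd := htop₂ t
    rw [le_div_iff₀ (by exact_mod_cast hn₂')] at hd
    have hz := zsum₂ (Sum.inl t)
    have : ((univ.filter (fun j : Fin n₂ => M (Sum.inl t) (Sum.inr j) = true)).card : ℝ)
        + ((Z₂ (Sum.inl t)).card : ℝ) = n₂ := by exact_mod_cast hz
    linarith
  have zr₁bot : ∀ t : Fin m₂, ((Z₁ (Sum.inr t)).card : ℝ) ≤ n₁ * (1 - δ₃) := by
    intro t
    have hd := hbot₁ t
    rw [le_div_iff₀ (by exact_mod_cast hn₁')] at hd
    have hz := zsum₁ (Sum.inr t)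
    have : ((univ.filter (fun j : Fin n₁ => M (Sum.inr t) (Sum.inl j) = true)).card : ℝ)
        + ((Z₁ (Sum.inr t)).card : ℝ) = n₁ := by exact_mod_cast hz
    linarith
  have zr₂bot : ∀ t : Fin m₂, ((Z₂ (Sum.inr t)).card : ℝ) ≤ n₂ * (1 - δ₄) := by
    intro t
    have hd := hbot₂ t
    rw [le_div_iff₀ (by exact_mod_cast hn₂')] at hd
    have hz := zsum₂ (Sum.inr t)
    have : ((univ.filter (fun j : Fin n₂ => M (Sum.inr t) (Sum.inr j) = true)).card : ℝ)
        + ((Z₂ (Sum.inr t)).card : ℝ) = n₂ := by exact_mod_cast hz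
    linarith
  set T₁ : ℝ := (n₁.choose k₁ : ℝ) with hT₁
  set T₂ : ℝ := (n₂.choose k₂ : ℝ) with hT₂
  have hT₁pos : 0 < T₁ := by rw [hT₁]; exact_mod_cast Nat.choose_pos hk₁
  have hT₂pos : 0 < T₂ := by rw [hT₂]; exact_mod_cast Nat.choose_pos hk₂
  -- per-row real bounds
  have rowtop : ∀ t : Fin m₁,
      (((Z₁ (Sum.inl t)).card.choose k₁ * (Z₂ (Sum.inl t)).card.choose k₂ : ℕ) : ℝ)
      ≤ T₁ * (1 - δ₁) ^ k₁ * (T₂ * (1 - δ₂) ^ k₂) := by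
    intro t
    push_cast
    have b1 := chooseRealBound (k := k₁) δ₁ hn₁' (zle₁ (Sum.inl t)) (by linarith [hδ₁.2]) (zr₁top t)
    have b2 := chooseRealBound (k := k₂) δ₂ hn₂' (zle₂ (Sum.inl t)) (by linarith [hδ₂.2]) (zr₂top t)
    have p1 : (0:ℝ) ≤ ((Z₁ (Sum.inl t)).card.choose k₁ : ℝ) := by positivity
    have p2 : (0:ℝ) ≤ ((Z₂ (Sum.inl t)).card.choose k₂ : ℝ) := by positivity
    calc ((Z₁ (Sum.inl t)).card.choose k₁ : ℝ) * ((Z₂ (Sum.inl t)).card.choose k₂ : ℝ)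
        ≤ (T₁ * (1 - δ₁) ^ k₁) * (T₂ * (1 - δ₂) ^ k₂) := by
          apply mul_le_mul b1 b2 p2
          exact mul_nonneg hT₁pos.le (pow_nonneg (by linarith [hδ₁.2]) _)
      _ = T₁ * (1 - δ₁) ^ k₁ * (T₂ * (1 - δ₂) ^ k₂) := by ring
  have rowbot : ∀ t : Fin m₂,
      (((Z₁ (Sum.inr t)).card.choose k₁ * (Z₂ (Sum.inr t)).card.choose k₂ : ℕ) : ℝ)
      ≤ T₁ * (1 - δ₃) ^ k₁ * (T₂ * (1 - δ₄) ^ k₂) := by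
    intro t
    push_cast
    have b1 := chooseRealBound (k := k₁) δ₃ hn₁' (zle₁ (Sum.inr t)) (by linarith [hδ₃.2]) (zr₁bot t)
    have b2 := chooseRealBound (k := k₂) δ₄ hn₂' (zle₂ (Sum.inr t)) (by linarith [hδ₄.2]) (zr₂bot t)
    have p2 : (0:ℝ) ≤ ((Z₂ (Sum.inr t)).card.choose k₂ : ℝ) := by positivity
    calc ((Z₁ (Sum.inr t)).card.choose k₁ : ℝ) * ((Z₂ (Sum.inr t)).card.choose k₂ : ℝ)
        ≤ (T₁ * (1 - δ₃) ^ k₁) * (T₂ * (1 - δ₄) ^ k₂) := by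
          apply mul_le_mul b1 b2 p2
          exact mul_nonneg hT₁pos.le (pow_nonneg (by linarith [hδ₃.2]) _)
      _ = T₁ * (1 - δ₃) ^ k₁ * (T₂ * (1 - δ₄) ^ k₂) := by ring
  have hPcard : (P.card : ℝ) = T₁ * T₂ := by
    rw [hP, Finset.card_product, Finset.card_powersetCard, Finset.card_powersetCard,
      Finset.card_univ, Finset.card_univ, Fintype.card_fin, Fintype.card_fin, hT₁, hT₂]
    push_cast
    ring
  -- combine
  have final : (P.card : ℝ) < T₁ * T₂ := by
    calc (P.card : ℝ)
        ≤ ((∑ i : Fin m₁ ⊕ Fin m₂,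
            ((Z₁ i).card.choose k₁ * (Z₂ i).card.choose k₂ : ℕ)) : ℝ) := by
          have := stepB
          rw [stepC] at this
          have heq : ∑ i : Fin m₁ ⊕ Fin m₂, (P.filter (fun p => p.1 ⊆ Z₁ i ∧ p.2 ⊆ Z₂ i)).card
              = ∑ i : Fin m₁ ⊕ Fin m₂, (Z₁ i).card.choose k₁ * (Z₂ i).card.choose k₂ :=
            Finset.sum_congr rfl (fun i _ => stepD i)
          rw [heq] at this
          exact_mod_cast this
      _ = (∑ t : Fin m₁,
            (((Z₁ (Sum.inl t)).card.choose k₁ * (Z₂ (Sum.inl t)).card.choose k₂ : ℕ) : ℝ))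
          + ∑ t : Fin m₂,
            (((Z₁ (Sum.inr t)).card.choose k₁ * (Z₂ (Sum.inr t)).card.choose k₂ : ℕ) : ℝ) := by
          rw [Fintype.sum_sum_type]
      _ ≤ (m₁ : ℝ) * (T₁ * (1 - δ₁) ^ k₁ * (T₂ * (1 - δ₂) ^ k₂))
          + (m₂ : ℝ) * (T₁ * (1 - δ₃) ^ k₁ * (T₂ * (1 - δ₄) ^ k₂)) := by
          have s1 : ∑ t : Fin m₁,
              (((Z₁ (Sum.inl t)).card.choose k₁ * (Z₂ (Sum.inl t)).card.choose k₂ : ℕ) : ℝ)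
              ≤ (m₁ : ℝ) * (T₁ * (1 - δ₁) ^ k₁ * (T₂ * (1 - δ₂) ^ k₂)) := by
            calc _ ≤ ∑ _t : Fin m₁, T₁ * (1 - δ₁) ^ k₁ * (T₂ * (1 - δ₂) ^ k₂) :=
                Finset.sum_le_sum (fun t _ => rowtop t)
              _ = (m₁ : ℝ) * (T₁ * (1 - δ₁) ^ k₁ * (T₂ * (1 - δ₂) ^ k₂)) := by
                rw [Finset.sum_const, Finset.card_univ, Fintype.card_fin, nsmul_eq_mul]
          have s2 : ∑ t : Fin m₂,
              (((Z₁ (Sum.inr t)).card.choose k₁ * (Z₂ (Sum.inr t)).card.choose k₂ : ℕ) : ℝ)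
              ≤ (m₂ : ℝ) * (T₁ * (1 - δ₃) ^ k₁ * (T₂ * (1 - δ₄) ^ k₂)) := by
            calc _ ≤ ∑ _t : Fin m₂, T₁ * (1 - δ₃) ^ k₁ * (T₂ * (1 - δ₄) ^ k₂) :=
                Finset.sum_le_sum (fun t _ => rowbot t)
              _ = (m₂ : ℝ) * (T₁ * (1 - δ₃) ^ k₁ * (T₂ * (1 - δ₄) ^ k₂)) := by
                rw [Finset.sum_const, Finset.card_univ, Fintype.card_fin, nsmul_eq_mul]
          linarith
      _ = (T₁ * T₂) * ((m₁ : ℝ) * (1 - δ₁) ^ k₁ * (1 - δ₂) ^ k₂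
          + (m₂ : ℝ) * (1 - δ₃) ^ k₁ * (1 - δ₄) ^ k₂) := by ring
      _ < (T₁ * T₂) * 1 := by
          apply mul_lt_mul_of_pos_left hcond
          positivity
      _ = T₁ * T₂ := by ring
  rw [hPcard] at final
  exact lt_irrefl _ final
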